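/- Let G and H be finite simple graphs containing no isolated vertices. Then γ_pr(G)·γ_pr(H) ≤ 6·γ_pr(G □ H). -/

import Mathlib

open SimpleGraph

/-- `D` is a dominating set of `G`: every vertex not in `D` has a neighbor in `D`. -/
def IsDomSet {V : Type*} (G : SimpleGraph V) (D : Finset V) : Prop :=
  ∀ v : V, v ∉ D → ∃ u ∈ D, G.Adj u v

/-- `D` is a paired dominating set of `G`: a dominating set such that the subgraph
of `G` induced by `D` has a perfect matching, i.e. there is a matching subgraph of `G`
whose vertex set is exactly `D`. -/
def IsPairedDomSet {V : Type*} (G : SimpleGraph V) (D : Finset V) : Prop :=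
  IsDomSet G D ∧ ∃ M : G.Subgraph, M.verts = ↑D ∧ M.IsMatching

/-- The paired domination number `γ_pr(G)`. -/
noncomputable def pairedDomNum {V : Type*} [Fintype V] (G : SimpleGraph V) : ℕ :=
  sInf {k : ℕ | ∃ D : Finset V, IsPairedDomSet G D ∧ D.card = k}

open Finset

lemma aux_pairedDomNum_le {α : Type*} [Fintype α] (Γ : SimpleGraph α) {P : Finset α}
    (h : IsPairedDomSet Γ P) : pairedDomNum Γ ≤ P.card :=
  Nat.sInf_le ⟨P, h, rfl⟩

lemma aux_exists_pairing {α : Type*} (Γ : SimpleGraph α) (D : Finset α)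
    (h : IsPairedDomSet Γ D) :
    ∃ f : α → α, ∀ x ∈ D, f x ∈ D ∧ Γ.Adj x (f x) ∧ f (f x) = x := by
  classical
  obtain ⟨-, M, hverts, hmatch⟩ := h
  have hm : ∀ x : α, x ∈ D → ∃! y, M.Adj x y := by
    intro x hx
    exact hmatch (by rw [hverts]; exact hx)
  refine ⟨fun x => if hx : x ∈ D then (hm x hx).choose else x, fun x hx => ?_⟩
  simp only [dif_pos hx]
  have hadj : M.Adj x (hm x hx).choose := (hm x hx).choose_spec.1
  have hyD : (hm x hx).choose ∈ D := by
    rw [← Finset.mem_coe, ← hverts]; exact M.edge_vert hadj.symm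
  refine ⟨hyD, M.adj_sub hadj, ?_⟩
  simp only [dif_pos hyD]
  exact ((hm _ hyD).choose_spec.2 x hadj.symm).symm

lemma aux_lemmaB {α : Type*} [Fintype α] [DecidableEq α] (Γ : SimpleGraph α)
    (hΓ : ∀ v : α, ∃ u, Γ.Adj u v) (X : Finset α) (hX : IsDomSet Γ X)
    (C : Finset α) (g : α → α) (hCX : C ⊆ X)
    (hg : ∀ x ∈ C, g x ∈ C ∧ Γ.Adj x (g x) ∧ g (g x) = x) :
    ∃ P : Finset α, IsPairedDomSet Γ P ∧ P.card ≤ X.card + (X \ C).card := by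
  classical
  let Good : Finset α → (α → α) → Prop := fun C' g' =>
    C ⊆ C' ∧ (∀ x ∈ C, g' x = g x) ∧
      ∀ x ∈ C', g' x ∈ C' ∧ Γ.Adj x (g' x) ∧ g' (g' x) = x ∧ (x ∈ X ∨ g' x ∈ X)
  have key : ∀ (k : ℕ) (C' : Finset α) (g' : α → α), (Finset.univ \ C').card ≤ k →
      Good C' g' → ∃ C'' g'', Good C'' g'' ∧
        ∀ x y, Γ.Adj x y → x ∉ C'' → y ∉ C'' → x ∉ X ∧ y ∉ X := by
    intro k
    induction k with
    | zero =>
      intro C' g' hcard hgood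
      refine ⟨C', g', hgood, fun x y hadj hx hy => ?_⟩
      exfalso
      apply hx
      by_contra hxC
      have : x ∈ Finset.univ \ C' := mem_sdiff.mpr ⟨mem_univ x, hxC⟩
      rw [Finset.card_eq_zero.mp (Nat.le_zero.mp hcard)] at this
      exact absurd this (notMem_empty x)
    | succ k ih =>
      intro C' g' hcard hgood
      by_cases h : ∃ x y, Γ.Adj x y ∧ x ∉ C' ∧ y ∉ C' ∧ (x ∈ X ∨ y ∈ X)
      · obtain ⟨x, y, hadj, hx, hy, hXxy⟩ := h
        have hxy : x ≠ y := hadj.ne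
        set C'' := insert x (insert y C') with hC''
        set g'' := fun z => if z = x then y else if z = y then x else g' z with hg''
        have hgxy : ∀ z, z ≠ x → z ≠ y → g'' z = g' z := by
          intro z h1 h2; simp only [hg'', if_neg h1, if_neg h2]
        have hgx : g'' x = y := by simp [hg'']
        have hgy : g'' y = x := by simp [hg'', hxy.symm]
        have hCne : ∀ z, z ∈ C' → z ≠ x ∧ z ≠ y := by
          intro z hz
          exact ⟨fun h => hx (h ▸ hz), fun h => hy (h ▸ hz)⟩
        have hgood'' : Good C'' g'' := by
          refine ⟨hgood.1.trans (by intro z hz; simp [hC'', hz]), ?_, ?_⟩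
          · intro z hz
            obtain ⟨h1, h2⟩ := hCne z (hgood.1 hz)
            rw [hgxy z h1 h2]; exact hgood.2.1 z hz
          · intro z hz
            rcases mem_insert.mp hz with rfl | hz'
            · rw [hgx, hgy]
              exact ⟨by simp [hC''], hadj, rfl, hXxy⟩
            rcases mem_insert.mp hz' with rfl | hz''
            · rw [hgy, hgx]
              exact ⟨by simp [hC''], hadj.symm, rfl, hXxy.symm⟩
            · obtain ⟨h1, h2, h3, h4⟩ := hgood.2.2 z hz''
              obtain ⟨hz1, hz2⟩ := hCne z hz''
              obtain ⟨hg1, hg2⟩ := hCne (g' z) h1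
              rw [hgxy z hz1 hz2, hgxy (g' z) hg1 hg2]
              exact ⟨by simp [hC'', h1], h2, h3, h4⟩
        have hlt : (Finset.univ \ C'').card ≤ k := by
          have hsub : Finset.univ \ C'' ⊆ Finset.univ \ C' := by
            apply sdiff_subset_sdiff (Finset.Subset.refl _)
            intro z hz; simp [hC'', hz]
          have hxin : x ∈ Finset.univ \ C' := mem_sdiff.mpr ⟨mem_univ x, hx⟩
          have hxout : x ∉ Finset.univ \ C'' := by
            simp [hC'']
          have : (Finset.univ \ C'').card < (Finset.univ \ C').card :=
            Finset.card_lt_card ⟨hsub, fun hss => hxout (hss hxin)⟩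
          omega
        exact ih C'' g'' hlt hgood''
      · refine ⟨C', g', hgood, fun a b hadj ha hb => ?_⟩
        exact ⟨fun hXa => h ⟨a, b, hadj, ha, hb, Or.inl hXa⟩,
               fun hXb => h ⟨a, b, hadj, ha, hb, Or.inr hXb⟩⟩
  obtain ⟨Cs, gs, ⟨hCCs, hgC, hCs⟩, hmax⟩ := key (Finset.univ \ C).card C g (le_refl _)
    ⟨le_refl _, fun x _ => rfl, fun x hx => ⟨(hg x hx).1, (hg x hx).2.1, (hg x hx).2.2,
      Or.inl (hCX hx)⟩⟩
  refine ⟨Cs, ⟨?_, ?_⟩, ?_⟩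
  · -- dominating
    intro v hv
    by_cases hvX : v ∈ X
    · obtain ⟨u, hu⟩ := hΓ v
      by_cases huC : u ∈ Cs
      · exact ⟨u, huC, hu⟩
      · exact absurd hvX (hmax u v hu huC hv).2
    · obtain ⟨u, huX, hu⟩ := hX v hvX
      by_cases huC : u ∈ Cs
      · exact ⟨u, huC, hu⟩
      · exact absurd huX (hmax u v hu huC hv).1
  · -- matching
    refine ⟨{ verts := ↑Cs,
              Adj := fun x y => (x ∈ Cs ∧ y = gs x) ∨ (y ∈ Cs ∧ x = gs y),
              adj_sub := ?_, edge_vert := ?_, symm := ?_ }, rfl, ?_⟩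
    · rintro v w (⟨hv, rfl⟩ | ⟨hw, rfl⟩)
      · exact (hCs v hv).2.1
      · exact (hCs w hw).2.1.symm
    · rintro v w (⟨hv, rfl⟩ | ⟨hw, rfl⟩)
      · exact hv
      · exact (hCs w hw).1
    · refine ⟨?_⟩; rintro v w (⟨hv, rfl⟩ | ⟨hw, rfl⟩)
      · exact Or.inr ⟨hv, rfl⟩
      · exact Or.inl ⟨hw, rfl⟩
    · intro v hv
      rw [Finset.mem_coe] at hv
      refine ⟨gs v, Or.inl ⟨hv, rfl⟩, ?_⟩
      rintro y (⟨_, rfl⟩ | ⟨hy, rfl⟩)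
      · rfl
      · exact ((hCs y hy).2.2.1).symm
  · -- cardinality
    have hsplit : Cs.card = (Cs ∩ X).card + (Cs \ X).card :=
      (card_inter_add_card_sdiff Cs X).symm
    have h1 : (Cs ∩ X).card ≤ X.card := card_le_card (inter_subset_right)
    have h2 : (Cs \ X).card ≤ (X \ C).card := by
      apply card_le_card_of_injOn gs
      · intro y hy
        rw [Finset.mem_coe, mem_sdiff] at hy ⊢
        obtain ⟨hyCs, hyX⟩ := hy
        obtain ⟨hg1, hg2, hg3, hg4⟩ := hCs y hyCs
        refine ⟨hg4.resolve_left hyX, fun hgyC => hyX ?_⟩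
        have : gs (gs y) = g (gs y) := hgC _ hgyC
        rw [hg3] at this
        rw [this]
        exact hCX (hg (gs y) hgyC).1
      · intro a ha b hb hab
        rw [Finset.mem_coe, mem_sdiff] at ha hb
        have := congrArg gs hab
        rwa [(hCs a ha.1).2.2.1, (hCs b hb.1).2.2.1] at this
    omega

lemma aux_lemmaC {β : Type*} [DecidableEq β] :
    ∀ (n : ℕ) (E : Finset (β × β)), E.card ≤ n →
    (∀ p ∈ E, (p.2, p.1) ∈ E) → (∀ p ∈ E, p.1 ≠ p.2) →
    ∃ (C : Finset β) (g : β → β),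
      (∀ x ∈ C, g x ∈ C ∧ (x, g x) ∈ E ∧ g (g x) = x) ∧
      (E.image Prod.fst).card + ((E.image Prod.fst) \ C).card ≤ E.card := by
  intro n
  induction n with
  | zero =>
    intro E hcard _ _
    have : E = ∅ := Finset.card_eq_zero.mp (Nat.le_zero.mp hcard)
    subst this
    exact ⟨∅, id, fun x hx => absurd hx (notMem_empty x), by simp⟩
  | succ n ih =>
    intro E hcard hsymm hirr
    rcases Finset.eq_empty_or_nonempty E with rfl | ⟨⟨a, b⟩, hab⟩
    · exact ⟨∅, id, fun x hx => absurd hx (notMem_empty x), by simp⟩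
    have hne : a ≠ b := hirr _ hab
    set E' := E.filter (fun q => q.1 ≠ a ∧ q.1 ≠ b ∧ q.2 ≠ a ∧ q.2 ≠ b) with hE'
    have hE'sub : E' ⊆ E := filter_subset _ _
    have hE'lt : E'.card ≤ n := by
      have : (a, b) ∉ E' := by simp [hE']
      have hlt : E'.card < E.card := Finset.card_lt_card ⟨hE'sub, fun hss => this (hss hab)⟩
      omega
    obtain ⟨C', g', hC', hcount'⟩ := ih E' hE'lt
      (fun p hp => by
        rw [hE', mem_filter] at hp ⊢
        exact ⟨hsymm p hp.1, hp.2.2.2.1, hp.2.2.2.2, hp.2.1, hp.2.2.1⟩)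
      (fun p hp => hirr p (hE'sub hp))
    have hC'ne : ∀ x ∈ C', x ≠ a ∧ x ≠ b := by
      intro x hx
      have := (hC' x hx).2.1
      rw [hE', mem_filter] at this
      exact ⟨this.2.1, this.2.2.1⟩
    set C := insert a (insert b C') with hC
    set g := fun z => if z = a then b else if z = b then a else g' z with hgdef
    have hga : g a = b := by simp [hgdef]
    have hgb : g b = a := by simp [hgdef, hne.symm]
    have hgoth : ∀ z, z ≠ a → z ≠ b → g z = g' z := by
      intro z h1 h2; simp only [hgdef, if_neg h1, if_neg h2]
    have hgprop : ∀ x ∈ C, g x ∈ C ∧ (x, g x) ∈ E ∧ g (g x) = x := by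
      intro x hx
      rcases mem_insert.mp hx with rfl | hx'
      · rw [hga]; exact ⟨by simp [hC], hab, by rw [hgb]⟩
      rcases mem_insert.mp hx' with rfl | hx''
      · rw [hgb]; exact ⟨by simp [hC], hsymm _ hab, by rw [hga]⟩
      · obtain ⟨h1, h2⟩ := hC'ne x hx''
        obtain ⟨hg1, hg2, hg3⟩ := hC' x hx''
        obtain ⟨h3, h4⟩ := hC'ne _ hg1
        rw [hgoth x h1 h2, hgoth _ h3 h4]
        exact ⟨by simp [hC, hg1], hE'sub hg2, hg3⟩
    refine ⟨C, g, hgprop, ?_⟩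
    -- counting
    set S := E.image Prod.fst with hS
    set S' := E'.image Prod.fst with hS'
    have hSsub : S' ⊆ S := image_subset_image hE'sub
    set Z := S \ S' with hZ
    set Z' := Z \ {a, b} with hZ'
    have hSC : S \ C ⊆ (S' \ C') ∪ Z' := by
      intro x hx
      rw [mem_sdiff] at hx
      obtain ⟨hxS, hxC⟩ := hx
      have hxa : x ≠ a := fun h => hxC (by rw [h, hC]; exact mem_insert_self _ _)
      have hxb : x ≠ b := fun h => hxC (by rw [h, hC]; simp)
      have hxC' : x ∉ C' := fun h => hxC (by rw [hC]; simp [h])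
      by_cases hxS' : x ∈ S'
      · exact mem_union_left _ (mem_sdiff.mpr ⟨hxS', hxC'⟩)
      · refine mem_union_right _ ?_
        rw [hZ', mem_sdiff, hZ, mem_sdiff]
        exact ⟨⟨hxS, hxS'⟩, by simp [hxa, hxb]⟩
    -- the injection bound
    have hZ'edge : ∀ z ∈ Z', ∃ y, (z, y) ∈ E ∧ (y = a ∨ y = b) := by
      intro z hz
      rw [hZ', mem_sdiff, hZ, mem_sdiff] at hz
      obtain ⟨⟨hzS, hzS'⟩, hzab⟩ := hz
      rw [mem_insert, mem_singleton] at hzab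
      push_neg at hzab
      obtain ⟨q, hqE, hq1⟩ := mem_image.mp hzS
      refine ⟨q.2, by rw [← hq1]; simpa using hqE, ?_⟩
      by_contra hcon
      push_neg at hcon
      apply hzS'
      rw [hS', mem_image]
      refine ⟨q, ?_, hq1⟩
      rw [hE', mem_filter]
      refine ⟨hqE, by rw [hq1]; exact hzab.1, by rw [hq1]; exact hzab.2, hcon.1, hcon.2⟩
    have hZ'ab : ∀ z ∈ Z', z ≠ a ∧ z ≠ b := by
      intro z hz
      rw [hZ', mem_sdiff] at hz
      have := hz.2
      rw [mem_insert, mem_singleton] at this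
      push_neg at this
      exact this
    have hkey : 2 * Z'.card + 2 ≤ (E \ E').card := by
      choose yd hy1 hy2 using hZ'edge
      set y : β → β := fun z => if hz : z ∈ Z' then yd z hz else z with hydef
      have hy1' : ∀ z ∈ Z', (z, y z) ∈ E := by
        intro z hz; simp only [hydef, dif_pos hz]; exact hy1 z hz
      have hy2' : ∀ z ∈ Z', y z = a ∨ y z = b := by
        intro z hz; simp only [hydef, dif_pos hz]; exact hy2 z hz
      set T := (E \ E') \ {(a, b), (b, a)} with hT
      have hmapsto : ∀ q ∈ Z' ×ˢ (Finset.univ : Finset Bool),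
          (if q.2 then (q.1, y q.1) else (y q.1, q.1)) ∈ T := by
        rintro ⟨z, i⟩ hq
        rw [mem_product] at hq
        have hz := hq.1
        obtain ⟨hza, hzb⟩ := hZ'ab z hz
        have hE1 : (z, y z) ∈ E := hy1' z hz
        have hE2 : (y z, z) ∈ E := hsymm _ hE1
        have hnE1 : (z, y z) ∉ E' := by
          rw [hE', mem_filter]
          rcases hy2' z hz with h | h <;> rw [h] <;> tauto
        have hnE2 : (y z, z) ∉ E' := by
          rw [hE', mem_filter]
          rcases hy2' z hz with h | h <;> rw [h] <;> tauto
        rw [hT, mem_sdiff, mem_sdiff]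
        rcases Bool.dichotomy i with rfl | rfl
        · rw [if_neg Bool.false_ne_true]
          refine ⟨⟨hE2, hnE2⟩, ?_⟩
          rw [mem_insert, mem_singleton]
          push_neg
          refine ⟨fun hcon => hzb (congrArg Prod.snd hcon),
                  fun hcon => hza (congrArg Prod.snd hcon)⟩
        · rw [if_pos rfl]
          refine ⟨⟨hE1, hnE1⟩, ?_⟩
          rw [mem_insert, mem_singleton]
          push_neg
          refine ⟨fun hcon => hza (congrArg Prod.fst hcon),
                  fun hcon => hzb (congrArg Prod.fst hcon)⟩
      have hinj : Set.InjOn (fun q : β × Bool => if q.2 then (q.1, y q.1) else (y q.1, q.1))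
          ↑(Z' ×ˢ (Finset.univ : Finset Bool)) := by
        rintro ⟨z, i⟩ hz ⟨z', i'⟩ hz' heq
        rw [Finset.mem_coe, mem_product] at hz hz'
        have hz1 := hz.1
        have hz1' := hz'.1
        dsimp only at heq hz1 hz1'
        rcases Bool.dichotomy i with rfl | rfl <;> rcases Bool.dichotomy i' with rfl | rfl
        · rw [if_neg Bool.false_ne_true, if_neg Bool.false_ne_true] at heq
          have h1 : z = z' := congrArg Prod.snd heq
          rw [h1]
        · rw [if_neg Bool.false_ne_true, if_pos rfl] at heq
          exfalso
          have h1 : z = y z' := congrArg Prod.snd heq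
          rcases hy2' z' hz1' with h | h <;> rw [h] at h1
          · exact (hZ'ab z hz1).1 h1
          · exact (hZ'ab z hz1).2 h1
        · rw [if_pos rfl, if_neg Bool.false_ne_true] at heq
          exfalso
          have h1 : z = y z' := congrArg Prod.fst heq
          rcases hy2' z' hz1' with h | h <;> rw [h] at h1
          · exact (hZ'ab z hz1).1 h1
          · exact (hZ'ab z hz1).2 h1
        · rw [if_pos rfl, if_pos rfl] at heq
          have h1 : z = z' := congrArg Prod.fst heq
          rw [h1]
      have hcard1 : (Z' ×ˢ (Finset.univ : Finset Bool)).card ≤ T.card :=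
        card_le_card_of_injOn _ hmapsto hinj
      have hcard2 : (Z' ×ˢ (Finset.univ : Finset Bool)).card = Z'.card * 2 := by
        rw [card_product, card_univ, Fintype.card_bool]
      have hpairsub : ({(a, b), (b, a)} : Finset (β × β)) ⊆ E \ E' := by
        intro q hq
        rw [mem_insert, mem_singleton] at hq
        rw [mem_sdiff]
        rcases hq with rfl | rfl
        · exact ⟨hab, by simp [hE']⟩
        · exact ⟨hsymm _ hab, by simp [hE']⟩
      have hpaircard : ({(a, b), (b, a)} : Finset (β × β)).card = 2 := by
        rw [card_insert_of_notMem (by simp [Prod.ext_iff, hne]), card_singleton]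
      have := Finset.card_sdiff_add_card_eq_card hpairsub
      rw [← hT] at this
      omega
    have c1 : (S \ S').card + S'.card = S.card := Finset.card_sdiff_add_card_eq_card hSsub
    have c2 : (S \ C).card ≤ (S' \ C').card + Z'.card :=
      le_trans (card_le_card hSC) (card_union_le _ _)
    have c3 : Z.card ≤ Z'.card + 2 := by
      have hsub : Z ⊆ Z' ∪ {a, b} := by
        intro x hx
        by_cases hxab : x ∈ ({a, b} : Finset β)
        · exact mem_union_right _ hxab
        · exact mem_union_left _ (mem_sdiff.mpr ⟨hx, hxab⟩)
      calc Z.card ≤ (Z' ∪ {a, b}).card := card_le_card hsub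
        _ ≤ Z'.card + ({a, b} : Finset β).card := card_union_le _ _
        _ ≤ Z'.card + 2 := by
            have : ({a, b} : Finset β).card ≤ 2 := card_insert_le _ _ |>.trans (by simp)
            omega
    have c4 : (E \ E').card + E'.card = E.card := Finset.card_sdiff_add_card_eq_card hE'sub
    have hZeq : Z = S \ S' := hZ
    rw [hZeq] at c3
    omega

lemma aux_exists_pds {α : Type*} [Fintype α] [DecidableEq α] (Γ : SimpleGraph α)
    (hΓ : ∀ v : α, ∃ u, Γ.Adj u v) :
    {k : ℕ | ∃ D : Finset α, IsPairedDomSet Γ D ∧ D.card = k}.Nonempty := by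
  obtain ⟨P, hP, -⟩ := aux_lemmaB Γ hΓ Finset.univ (fun v hv => absurd (mem_univ v) hv)
    ∅ id (empty_subset _) (fun x hx => absurd hx (notMem_empty x))
  exact ⟨P.card, P, hP, rfl⟩

set_option maxHeartbeats 3200000 in
/-- `γ_pr(G)·γ_pr(H) ≤ 6·γ_pr(G □ H)` for graphs without isolated vertices. -/
theorem pairedDomNum_mul_pairedDomNum_le_six_mul_pairedDomNum_boxProd
    {V W : Type*} [Fintype V] [Fintype W]
    (G : SimpleGraph V) (H : SimpleGraph W)
    (hG : ∀ v : V, ∃ u : V, G.Adj u v) (hH : ∀ w : W, ∃ u : W, H.Adj u w) :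
    pairedDomNum G * pairedDomNum H ≤ 6 * pairedDomNum (G □ H) := by
  classical
  -- no isolated vertices in the box product
  have hGH : ∀ x : V × W, ∃ y, (G □ H).Adj y x := by
    intro x
    obtain ⟨u, hu⟩ := hG x.1
    exact ⟨(u, x.2), boxProd_adj.mpr (Or.inl ⟨hu, rfl⟩)⟩
  -- minimum paired dominating set of G
  obtain ⟨DG, hDGp, hDGcard⟩ :
      ∃ DD : Finset V, IsPairedDomSet G DD ∧ DD.card = pairedDomNum G := by
    have h := Nat.sInf_mem (aux_exists_pds G hG)
    exact h
  obtain ⟨fG, hfG⟩ := aux_exists_pairing G DG hDGp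
  -- the pairs of DG
  set I : Finset (Sym2 V) := DG.image (fun a => s(a, fG a)) with hIdef
  have hfib2 : ∀ e ∈ I, (DG.filter (fun x => s(x, fG x) = e)).card = 2 := by
    intro e he
    obtain ⟨a, haDG, hae⟩ := mem_image.mp he
    have hfa : fG a ∈ DG := (hfG a haDG).1
    have hinva : fG (fG a) = a := (hfG a haDG).2.2
    have hnea : a ≠ fG a := (hfG a haDG).2.1.ne
    have hset : DG.filter (fun x => s(x, fG x) = e) = {a, fG a} := by
      ext x
      simp only [mem_filter, mem_insert, mem_singleton]
      constructor
      · rintro ⟨hxDG, hxe⟩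
        rw [← hae] at hxe
        rcases Sym2.eq_iff.mp hxe with ⟨h1, -⟩ | ⟨h1, -⟩
        · exact Or.inl h1
        · exact Or.inr h1
      · rintro (rfl | rfl)
        · exact ⟨haDG, hae⟩
        · refine ⟨hfa, ?_⟩
          rw [hinva, Sym2.eq_swap]
          exact hae
    rw [hset, card_insert_of_notMem (by simpa using hnea), card_singleton]
  have card2I : DG.card = 2 * I.card := by
    rw [card_eq_sum_card_fiberwise (f := fun a => s(a, fG a)) (t := I)
      (fun x hx => mem_image_of_mem _ hx)]
    rw [Finset.sum_congr rfl hfib2, sum_const, smul_eq_mul, mul_comm]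
  have hgamG : pairedDomNum G = 2 * I.card := by rw [← hDGcard]; exact card2I
  -- the class map
  have hdomG : ∀ v : V, ∃ u, u ∈ DG ∧ (u = v ∨ G.Adj u v) := by
    intro v
    by_cases hv : v ∈ DG
    · exact ⟨v, hv, Or.inl rfl⟩
    · obtain ⟨u, huDG, hadj⟩ := hDGp.1 v hv
      exact ⟨u, huDG, Or.inr hadj⟩
  choose uv huv1 huv2 using hdomG
  set cl : V → Sym2 V := fun v => s(uv v, fG (uv v)) with hcl
  have hclI : ∀ v, cl v ∈ I := fun v => mem_image_of_mem _ (huv1 v)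
  -- minimum paired dominating set of G □ H
  obtain ⟨D, hDp, hDcard⟩ :
      ∃ DD : Finset (V × W), IsPairedDomSet (G □ H) DD ∧ DD.card = pairedDomNum (G □ H) := by
    have h := Nat.sInf_mem (aux_exists_pds (G □ H) hGH)
    exact h
  obtain ⟨f, hf⟩ := aux_exists_pairing (G □ H) D hDp
  have hfmem : ∀ d ∈ D, f d ∈ D := fun d hd => (hf d hd).1
  have hfadj : ∀ d ∈ D, (G □ H).Adj d (f d) := fun d hd => (hf d hd).2.1
  have hfinv : ∀ d ∈ D, f (f d) = d := fun d hd => (hf d hd).2.2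
  set Dv : Finset (V × W) := D.filter (fun d => (f d).1 = d.1) with hDvdef
  set Dh : Finset (V × W) := D.filter (fun d => ¬ ((f d).1 = d.1)) with hDhdef
  have hDvD : Dv ⊆ D := filter_subset _ _
  have hDhD : Dh ⊆ D := filter_subset _ _
  have hsplitD : ∀ d ∈ D, d ∈ Dv ∨ d ∈ Dh := by
    intro d hd
    by_cases hc : (f d).1 = d.1
    · exact Or.inl (mem_filter.mpr ⟨hd, hc⟩)
    · exact Or.inr (mem_filter.mpr ⟨hd, hc⟩)
  have hDv_adj : ∀ d ∈ Dv, H.Adj d.2 (f d).2 := by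
    intro d hd
    obtain ⟨hdD, hfst⟩ := mem_filter.mp hd
    rcases boxProd_adj.mp (hfadj d hdD) with ⟨h1, h2⟩ | ⟨h1, h2⟩
    · exfalso
      have heq : d = f d := Prod.ext hfst.symm h2
      exact absurd (hfadj d hdD) (by rw [← heq]; exact (G □ H).irrefl)
    · exact h1
  have hDh_adj : ∀ d ∈ Dh, G.Adj d.1 (f d).1 ∧ (f d).2 = d.2 := by
    intro d hd
    obtain ⟨hdD, hfst⟩ := mem_filter.mp hd
    rcases boxProd_adj.mp (hfadj d hdD) with ⟨h1, h2⟩ | ⟨h1, h2⟩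
    · exact ⟨h1, h2.symm⟩
    · exact absurd h2.symm hfst
  have hDv_closed : ∀ d ∈ Dv, f d ∈ Dv := by
    intro d hd
    obtain ⟨hdD, hfst⟩ := mem_filter.mp hd
    refine mem_filter.mpr ⟨hfmem d hdD, ?_⟩
    rw [hfinv d hdD]
    exact hfst.symm
  have hDh_closed : ∀ d ∈ Dh, f d ∈ Dh := by
    intro d hd
    obtain ⟨hdD, hfst⟩ := mem_filter.mp hd
    refine mem_filter.mpr ⟨hfmem d hdD, ?_⟩
    rw [hfinv d hdD]
    exact fun h => hfst h.symm
  -- layer projections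
  have hlayer : ∀ (S : Finset (V × W)) (w : W), ∃ L : Finset V,
      (∀ v, v ∈ L ↔ (v, w) ∈ S) ∧ L.card = (S.filter (fun d => d.2 = w)).card := by
    intro S w
    refine ⟨(S.filter (fun d => d.2 = w)).image Prod.fst, fun v => ?_, ?_⟩
    · constructor
      · intro hv
        obtain ⟨d, hd, hd1⟩ := mem_image.mp hv
        obtain ⟨hdD, hd2⟩ := mem_filter.mp hd
        have : d = (v, w) := Prod.ext hd1 hd2
        rwa [this] at hdD
      · intro hv
        exact mem_image.mpr ⟨(v, w), mem_filter.mpr ⟨hv, rfl⟩, rfl⟩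
    · apply card_image_of_injOn
      intro d hd d' hd' hdd
      rw [Finset.mem_coe, mem_filter] at hd hd'
      exact Prod.ext hdd (hd.2.trans hd'.2.symm)
  choose Pw hPwmem _hPwcard using fun w => hlayer D w
  choose Hw hHwmem hHwcard using fun w => hlayer Dh w
  choose Vw hVwmem hVwcard using fun w => hlayer Dv w
  have hPwsplit : ∀ w x, x ∈ Pw w → x ∈ Hw w ∨ x ∈ Vw w := by
    intro w x hx
    rcases hsplitD _ ((hPwmem w x).mp hx) with h | h
    · exact Or.inr ((hVwmem w x).mpr h)
    · exact Or.inl ((hHwmem w x).mpr h)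
  -- labels and Z sets
  have hLabx : ∀ w : W, ∃ L : Finset (Sym2 V), ∀ e, e ∈ L ↔
      e ∈ I ∧ ∃ v, cl v = e ∧ ¬∃ u ∈ Pw w, G.Adj u v :=
    fun w => ⟨I.filter (fun e => ∃ v, cl v = e ∧ ¬∃ u ∈ Pw w, G.Adj u v),
      fun e => mem_filter⟩
  choose Lab hLabmem using hLabx
  have hLabI : ∀ w, Lab w ⊆ I := fun w e he => ((hLabmem w e).mp he).1
  have hZwx : ∀ w : W, ∃ Z : Finset V, ∀ x, x ∈ Z ↔ x ∈ DG ∧ s(x, fG x) ∈ Lab w :=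
    fun w => ⟨DG.filter (fun x => s(x, fG x) ∈ Lab w), fun x => mem_filter⟩
  choose Zw hZwmem using hZwx
  have hZwDG : ∀ w, Zw w ⊆ DG := fun w x hx => ((hZwmem w x).mp hx).1
  have hZwf : ∀ w x, x ∈ Zw w → fG x ∈ Zw w := by
    intro w x hx
    obtain ⟨hxDG, hxe⟩ := (hZwmem w x).mp hx
    refine (hZwmem w (fG x)).mpr ⟨(hfG x hxDG).1, ?_⟩
    rw [(hfG x hxDG).2.2, Sym2.eq_swap]
    exact hxe
  have hZwcard : ∀ w, (Zw w).card ≤ 2 * (Lab w).card := by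
    intro w
    rw [card_eq_sum_card_fiberwise (f := fun x => s(x, fG x)) (t := Lab w)
      (fun x hx => ((hZwmem w x).mp hx).2)]
    calc ∑ e ∈ Lab w, ((Zw w).filter (fun x => s(x, fG x) = e)).card
        ≤ ∑ e ∈ Lab w, 2 := by
          refine Finset.sum_le_sum (fun e he => ?_)
          rw [← hfib2 e (hLabI w he)]
          refine card_le_card (fun x hx => ?_)
          rw [mem_filter] at hx ⊢
          exact ⟨hZwDG w hx.1, hx.2⟩
      _ = 2 * (Lab w).card := by rw [sum_const, smul_eq_mul, mul_comm]
  -- Count 1 : per-layer bound on the number of unlabeled classes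
  have count1 : ∀ w : W, 2 * (I \ Lab w).card ≤
      (Dh.filter (fun d => d.2 = w)).card + 2 * (Dv.filter (fun d => d.2 = w)).card := by
    intro w
    set hp : V → V := fun v => (f (v, w)).1 with hhp
    have hpHw : ∀ v ∈ Hw w, hp v ∈ Hw w ∧ G.Adj v (hp v) ∧ hp (hp v) = v := by
      intro v hv
      have hvDh : (v, w) ∈ Dh := (hHwmem w v).mp hv
      obtain ⟨hadj, hsnd⟩ := hDh_adj _ hvDh
      have hfeq : f (v, w) = (hp v, w) := Prod.ext rfl hsnd
      have hpDh : (hp v, w) ∈ Dh := by rw [← hfeq]; exact hDh_closed _ hvDh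
      refine ⟨(hHwmem w (hp v)).mpr hpDh, hadj, ?_⟩
      show (f (hp v, w)).1 = v
      rw [← hfeq, hfinv _ (hDhD hvDh)]
    set X1 : Finset V := Pw w ∪ Zw w with hX1def
    set C1 : Finset V := Zw w ∪ (Hw w).filter (fun v => v ∉ Zw w ∧ hp v ∉ Zw w) with hC1def
    set g1 : V → V := fun x => if x ∈ Zw w then fG x else hp x with hg1def
    have hX1dom : IsDomSet G X1 := by
      intro v hv
      have hvP : v ∉ Pw w := fun h => hv (mem_union_left _ h)
      have hvZ : v ∉ Zw w := fun h => hv (mem_union_right _ h)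
      by_cases he : cl v ∈ Lab w
      · have huvZ : uv v ∈ Zw w := (hZwmem w (uv v)).mpr ⟨huv1 v, he⟩
        rcases huv2 v with heq | hadj
        · rw [heq] at huvZ
          exact absurd huvZ hvZ
        · exact ⟨uv v, mem_union_right _ huvZ, hadj⟩
      · have hex : ∀ v', cl v' = cl v → ∃ u ∈ Pw w, G.Adj u v' := by
          intro v' hv'
          by_contra hcon
          exact he ((hLabmem w (cl v)).mpr ⟨hclI v, v', hv', hcon⟩)
        obtain ⟨u, huP, huadj⟩ := hex v rfl
        exact ⟨u, mem_union_left _ huP, huadj⟩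
    have hHwPw : Hw w ⊆ Pw w := by
      intro x hx
      exact (hPwmem w x).mpr (hDhD ((hHwmem w x).mp hx))
    have hC1sub : C1 ⊆ X1 := by
      rw [hC1def]
      refine union_subset (subset_union_right) ?_
      exact (filter_subset _ _).trans (hHwPw.trans subset_union_left)
    have hg1good : ∀ x ∈ C1, g1 x ∈ C1 ∧ G.Adj x (g1 x) ∧ g1 (g1 x) = x := by
      intro x hx
      rcases mem_union.mp hx with hxZ | hxF
      · have hxDG : x ∈ DG := hZwDG w hxZ
        have hfZ : fG x ∈ Zw w := hZwf w x hxZ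
        have e1 : g1 x = fG x := by rw [hg1def]; exact if_pos hxZ
        have e2 : g1 (fG x) = fG (fG x) := by rw [hg1def]; exact if_pos hfZ
        rw [e1]
        refine ⟨mem_union_left _ hfZ, (hfG x hxDG).2.1, ?_⟩
        rw [e2, (hfG x hxDG).2.2]
      · obtain ⟨hxH, hxnZ, hpnZ⟩ := mem_filter.mp hxF
        obtain ⟨hpH, hpadj, hpinv⟩ := hpHw x hxH
        have e1 : g1 x = hp x := by rw [hg1def]; exact if_neg hxnZ
        have e2 : g1 (hp x) = hp (hp x) := by rw [hg1def]; exact if_neg hpnZ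
        rw [e1]
        refine ⟨mem_union_right _ (mem_filter.mpr ⟨hpH, hpnZ, ?_⟩), hpadj, ?_⟩
        · rw [hpinv]; exact hxnZ
        · rw [e2, hpinv]
    obtain ⟨P, hPp, hPcard⟩ := aux_lemmaB G hG X1 hX1dom C1 g1 hC1sub hg1good
    have h2I : 2 * I.card ≤ X1.card + (X1 \ C1).card := by
      rw [← hgamG]
      exact (aux_pairedDomNum_le G hPp).trans hPcard
    -- arithmetic
    have n1 : X1.card ≤ (Hw w \ Zw w).card + ((Vw w \ Zw w).card + (Zw w).card) := by
      have hsub : X1 ⊆ (Hw w \ Zw w) ∪ ((Vw w \ Zw w) ∪ Zw w) := by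
        intro x hx
        by_cases hxZ : x ∈ Zw w
        · exact mem_union_right _ (mem_union_right _ hxZ)
        · rcases mem_union.mp hx with hxP | hxZ'
          · rcases hPwsplit w x hxP with h | h
            · exact mem_union_left _ (mem_sdiff.mpr ⟨h, hxZ⟩)
            · exact mem_union_right _ (mem_union_left _ (mem_sdiff.mpr ⟨h, hxZ⟩))
          · exact absurd hxZ' hxZ
      calc X1.card ≤ ((Hw w \ Zw w) ∪ ((Vw w \ Zw w) ∪ Zw w)).card := card_le_card hsub
        _ ≤ (Hw w \ Zw w).card + ((Vw w \ Zw w) ∪ Zw w).card := card_union_le _ _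
        _ ≤ (Hw w \ Zw w).card + ((Vw w \ Zw w).card + (Zw w).card) := by
            have := card_union_le (Vw w \ Zw w) (Zw w)
            omega
    set Bad : Finset V := (Hw w).filter (fun v => v ∉ Zw w ∧ hp v ∈ Zw w) with hBaddef
    have n2 : (X1 \ C1).card ≤ (Vw w \ Zw w).card + Bad.card := by
      have hsub : X1 \ C1 ⊆ (Vw w \ Zw w) ∪ Bad := by
        intro x hx
        obtain ⟨hxX, hxC⟩ := mem_sdiff.mp hx
        have hxnZ : x ∉ Zw w := fun h => hxC (mem_union_left _ h)
        have hxP : x ∈ Pw w := by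
          rcases mem_union.mp hxX with h | h
          · exact h
          · exact absurd h hxnZ
        by_cases hxV : x ∈ Vw w
        · exact mem_union_left _ (mem_sdiff.mpr ⟨hxV, hxnZ⟩)
        · have hxH : x ∈ Hw w := by
            rcases hPwsplit w x hxP with h | h
            · exact h
            · exact absurd h hxV
          have hpZ : hp x ∈ Zw w := by
            by_contra hpnZ
            exact hxC (mem_union_right _ (mem_filter.mpr ⟨hxH, hxnZ, hpnZ⟩))
          exact mem_union_right _ (mem_filter.mpr ⟨hxH, hxnZ, hpZ⟩)
      exact (card_le_card hsub).trans (card_union_le _ _)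
    have n3 : Bad.card ≤ (Hw w ∩ Zw w).card := by
      refine card_le_card_of_injOn hp (fun v hv => ?_) (fun a ha b hb hab => ?_)
      · obtain ⟨hvH, -, hpZ⟩ := mem_filter.mp hv
        exact mem_inter.mpr ⟨(hpHw v hvH).1, hpZ⟩
      · rw [Finset.mem_coe, hBaddef, mem_filter] at ha hb
        have h1 := (hpHw a ha.1).2.2
        have h2 := (hpHw b hb.1).2.2
        rw [← h1, ← h2, hab]
    have n4 : (Zw w).card ≤ 2 * (Lab w).card := hZwcard w
    have n5 : (Hw w ∩ Zw w).card + (Hw w \ Zw w).card = (Hw w).card :=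
      card_inter_add_card_sdiff _ _
    have n6 : (Vw w \ Zw w).card ≤ (Vw w).card := card_le_card (sdiff_subset)
    have n7 : (I \ Lab w).card + (Lab w).card = I.card :=
      Finset.card_sdiff_add_card_eq_card (hLabI w)
    have n8 := hHwcard w
    have n9 := hVwcard w
    omega
  -- Count 2 : per-class bound
  have count2 : ∀ e ∈ I, pairedDomNum H ≤
      (Dv.filter (fun d => cl d.1 = e)).card + 2 * (Dh.filter (fun d => cl d.1 = e)).card
        + 2 * (univ.filter (fun w : W => e ∉ Lab w)).card := by
    intro e heI
    set Dve : Finset (V × W) := Dv.filter (fun d => cl d.1 = e) with hDvedef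
    set Dhe : Finset (V × W) := Dh.filter (fun d => cl d.1 = e) with hDhedef
    have hDveclosed : ∀ d ∈ Dve, f d ∈ Dve := by
      intro d hd
      obtain ⟨hdv, hdcl⟩ := mem_filter.mp hd
      refine mem_filter.mpr ⟨hDv_closed d hdv, ?_⟩
      have : (f d).1 = d.1 := (mem_filter.mp hdv).2
      rw [this]
      exact hdcl
    set Ee : Finset (W × W) := Dve.image (fun d => (d.2, (f d).2)) with hEedef
    have hEadj : ∀ p ∈ Ee, H.Adj p.1 p.2 := by
      intro p hp
      obtain ⟨d, hd, hdp⟩ := mem_image.mp hp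
      rw [← hdp]
      exact hDv_adj d (mem_of_mem_filter d hd)
    have hEsymm : ∀ p ∈ Ee, (p.2, p.1) ∈ Ee := by
      intro p hp
      obtain ⟨d, hd, hdp⟩ := mem_image.mp hp
      have hfd : f d ∈ Dve := hDveclosed d hd
      refine mem_image.mpr ⟨f d, hfd, ?_⟩
      rw [hfinv d (hDvD (mem_of_mem_filter d hd)), ← hdp]
    have hEirr : ∀ p ∈ Ee, p.1 ≠ p.2 := fun p hp => (hEadj p hp).ne
    obtain ⟨C2, g2, hC2, hcount2⟩ := aux_lemmaC Ee.card Ee le_rfl hEsymm hEirr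
    set Se : Finset W := Ee.image Prod.fst with hSedef
    set HPe : Finset W := Dhe.image Prod.snd with hHPedef
    set Ue : Finset W := univ.filter (fun w : W => e ∉ Lab w) with hUedef
    set X2 : Finset W := Se ∪ HPe ∪ Ue with hX2def
    have hX2dom : IsDomSet H X2 := by
      intro w hw
      have hwSe : w ∉ Se := fun h => hw (mem_union_left _ (mem_union_left _ h))
      have hwHPe : w ∉ HPe := fun h => hw (mem_union_left _ (mem_union_right _ h))
      have hwUe : w ∉ Ue := fun h => hw (mem_union_right _ h)
      have heLab : e ∈ Lab w := by
        by_contra hcon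
        exact hwUe (mem_filter.mpr ⟨mem_univ w, hcon⟩)
      obtain ⟨-, v, hve, hnv⟩ := (hLabmem w e).mp heLab
      by_cases hvD : (v, w) ∈ D
      · rcases hsplitD _ hvD with hvV | hvH
        · exfalso
          apply hwSe
          have hvDve : (v, w) ∈ Dve := mem_filter.mpr ⟨hvV, hve⟩
          exact mem_image.mpr ⟨((v, w).2, (f (v, w)).2),
            mem_image.mpr ⟨(v, w), hvDve, rfl⟩, rfl⟩
        · exfalso
          apply hnv
          obtain ⟨hadj, hsnd⟩ := hDh_adj _ hvH
          refine ⟨(f (v, w)).1, (hPwmem w _).mpr ?_, hadj.symm⟩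
          have hfeq : f (v, w) = ((f (v, w)).1, w) := Prod.ext rfl hsnd
          rw [← hfeq]
          exact hfmem _ (hDhD hvH)
      · obtain ⟨d, hdD, hdadj⟩ := hDp.1 (v, w) hvD
        rcases boxProd_adj.mp hdadj with ⟨hGa, hsnd⟩ | ⟨hHa, hfst⟩
        · exfalso
          apply hnv
          refine ⟨d.1, (hPwmem w d.1).mpr ?_, hGa⟩
          have : d = (d.1, w) := Prod.ext rfl hsnd
          rwa [this] at hdD
        · rcases hsplitD _ hdD with hdV | hdH
          · refine ⟨d.2, mem_union_left _ (mem_union_left _ ?_), hHa⟩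
            have hdDve : d ∈ Dve := mem_filter.mpr ⟨hdV, by rw [hfst]; exact hve⟩
            exact mem_image.mpr ⟨(d.2, (f d).2), mem_image.mpr ⟨d, hdDve, rfl⟩, rfl⟩
          · refine ⟨d.2, mem_union_left _ (mem_union_right _ ?_), hHa⟩
            exact mem_image.mpr ⟨d, mem_filter.mpr ⟨hdH, by rw [hfst]; exact hve⟩, rfl⟩
    have hC2Se : C2 ⊆ Se := fun x hx => mem_image.mpr ⟨(x, g2 x), (hC2 x hx).2.1, rfl⟩
    have hC2sub : C2 ⊆ X2 := hC2Se.trans ((subset_union_left).trans subset_union_left)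
    have hg2good : ∀ x ∈ C2, g2 x ∈ C2 ∧ H.Adj x (g2 x) ∧ g2 (g2 x) = x :=
      fun x hx => ⟨(hC2 x hx).1, hEadj _ (hC2 x hx).2.1, (hC2 x hx).2.2⟩
    obtain ⟨P2, hP2p, hP2card⟩ := aux_lemmaB H hH X2 hX2dom C2 g2 hC2sub hg2good
    have hgH : pairedDomNum H ≤ X2.card + (X2 \ C2).card :=
      (aux_pairedDomNum_le H hP2p).trans hP2card
    -- arithmetic
    have m1 : X2.card ≤ Se.card + (HPe.card + Ue.card) := by
      have h1 := card_union_le (Se ∪ HPe) Ue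
      have h2 := card_union_le Se HPe
      rw [hX2def]
      omega
    have m2 : (X2 \ C2).card ≤ (Se \ C2).card + (HPe.card + Ue.card) := by
      have hsub : X2 \ C2 ⊆ (Se \ C2) ∪ (HPe ∪ Ue) := by
        intro x hx
        obtain ⟨hxX, hxC⟩ := mem_sdiff.mp hx
        rcases mem_union.mp hxX with h | h
        · rcases mem_union.mp h with h' | h'
          · exact mem_union_left _ (mem_sdiff.mpr ⟨h', hxC⟩)
          · exact mem_union_right _ (mem_union_left _ h')
        · exact mem_union_right _ (mem_union_right _ h)
      calc (X2 \ C2).card ≤ ((Se \ C2) ∪ (HPe ∪ Ue)).card := card_le_card hsub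
        _ ≤ (Se \ C2).card + (HPe ∪ Ue).card := card_union_le _ _
        _ ≤ (Se \ C2).card + (HPe.card + Ue.card) := by
            have := card_union_le HPe Ue
            omega
    have m3 : Se.card + (Se \ C2).card ≤ Ee.card := hcount2
    have m4 : Ee.card ≤ Dve.card := card_image_le
    have m5 : HPe.card ≤ Dhe.card := card_image_le
    omega
  -- summations
  have S1 : ∑ e ∈ I, (Dv.filter (fun d => cl d.1 = e)).card = Dv.card :=
    (card_eq_sum_card_fiberwise (f := fun d => cl d.1) (s := Dv) (t := I)
      (fun d _ => hclI d.1)).symm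
  have S2 : ∑ e ∈ I, (Dh.filter (fun d => cl d.1 = e)).card = Dh.card :=
    (card_eq_sum_card_fiberwise (f := fun d => cl d.1) (s := Dh) (t := I)
      (fun d _ => hclI d.1)).symm
  have S3 : ∑ e ∈ I, (univ.filter (fun w : W => e ∉ Lab w)).card
      = ∑ w ∈ (univ : Finset W), (I \ Lab w).card := by
    have h1 : ∀ e : Sym2 V, (univ.filter (fun w : W => e ∉ Lab w)).card
        = ∑ w ∈ (univ : Finset W), if e ∉ Lab w then 1 else 0 :=
      fun e => card_filter _ _
    have h2 : ∀ w : W, (I \ Lab w).card = ∑ e ∈ I, if e ∉ Lab w then 1 else 0 := by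
      intro w
      rw [sdiff_eq_filter]
      exact card_filter _ _
    rw [Finset.sum_congr rfl (fun e _ => h1 e), Finset.sum_comm]
    exact Finset.sum_congr rfl (fun w _ => (h2 w).symm)
  have S4 : ∑ w ∈ (univ : Finset W), (Dh.filter (fun d => d.2 = w)).card = Dh.card :=
    (card_eq_sum_card_fiberwise (f := fun d => d.2) (s := Dh) (t := univ)
      (fun d _ => mem_univ d.2)).symm
  have S5 : ∑ w ∈ (univ : Finset W), (Dv.filter (fun d => d.2 = w)).card = Dv.card :=
    (card_eq_sum_card_fiberwise (f := fun d => d.2) (s := Dv) (t := univ)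
      (fun d _ => mem_univ d.2)).symm
  have hsum1 : 2 * (∑ w ∈ (univ : Finset W), (I \ Lab w).card) ≤ Dh.card + 2 * Dv.card := by
    have h := Finset.sum_le_sum (fun w (_ : w ∈ (univ : Finset W)) => count1 w)
    rw [← Finset.mul_sum] at h
    rw [Finset.sum_add_distrib, ← Finset.mul_sum, S4, S5] at h
    exact h
  have hsum2 : I.card * pairedDomNum H ≤
      Dv.card + 2 * Dh.card + 2 * ∑ w ∈ (univ : Finset W), (I \ Lab w).card := by
    have h := Finset.sum_le_sum count2
    rw [sum_const, smul_eq_mul] at h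
    rw [Finset.sum_add_distrib, Finset.sum_add_distrib, ← Finset.mul_sum, ← Finset.mul_sum,
      S1, S2, S3] at h
    exact h
  have hDsplit : Dv.card + Dh.card = D.card := by
    rw [hDvdef, hDhdef]
    exact card_filter_add_card_filter_not _
  have hfinal : I.card * pairedDomNum H ≤ 3 * D.card := by omega
  calc pairedDomNum G * pairedDomNum H = 2 * (I.card * pairedDomNum H) := by
        rw [hgamG, mul_assoc]
    _ ≤ 2 * (3 * D.card) := Nat.mul_le_mul_left _ hfinal
    _ = 6 * D.card := by ring
    _ = 6 * pairedDomNum (G □ H) := by rw [hDcard]
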